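/- Let 𝓘 be the set of binary functions f with f(0,1)=f(1,0)=0 and f(0,0)·f(1,1) ≠ 0 (invertible diagonal 2×2 matrices), let NEQ be the binary disequality function, and let t be the symmetric binary function [0,1,μ] (matrix [[0,1],[1,μ]]) for some μ ≠ 0. Then every non-degenerate binary function (i.e., every binary function whose 2×2 matrix is invertible) lies in the holant clone generated by 𝓘 ∪ {NEQ, t}. -/

import Mathlib

/-- A Boolean-input complex-valued function together with its arity. -/
abbrev Fn : Type := Σ n : ℕ, (Fin n → Bool) → ℂ

/-- The holant clone generated by `F`: the closure of `F` under tensor product,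
permutation of arguments, and contraction of the last two arguments. -/
inductive HClone (F : Set Fn) : Fn → Prop
  | base {f : Fn} : f ∈ F → HClone F f
  | tensor {k l : ℕ} {f : (Fin k → Bool) → ℂ} {g : (Fin l → Bool) → ℂ} :
      HClone F ⟨k, f⟩ → HClone F ⟨l, g⟩ →
      HClone F ⟨k + l, fun x => f (fun i => x (Fin.castAdd l i)) *
        g (fun j => x (Fin.natAdd k j))⟩
  | perm {k : ℕ} {f : (Fin k → Bool) → ℂ} (π : Equiv.Perm (Fin k)) :
      HClone F ⟨k, f⟩ → HClone F ⟨k, fun x => f (fun i => x (π i))⟩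
  | contract {k : ℕ} {f : (Fin (k + 2) → Bool) → ℂ} :
      HClone F ⟨k + 2, f⟩ →
      HClone F ⟨k, fun x => ∑ y : Bool, f (Fin.snoc (Fin.snoc x y) y)⟩

/-- `𝓘`: binary functions corresponding to invertible diagonal 2×2 matrices. -/
def InI (f : (Fin 2 → Bool) → ℂ) : Prop :=
  f ![false, true] = 0 ∧ f ![true, false] = 0 ∧
    f ![false, false] * f ![true, true] ≠ 0

/-- The binary disequality function. -/
def NEQfn : (Fin 2 → Bool) → ℂ := fun x => if x 0 = x 1 then 0 else 1

/-- The symmetric binary function `t = [0,1,μ]`, with matrix `[[0,1],[1,μ]]`. -/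
def tfn (μ : ℂ) : (Fin 2 → Bool) → ℂ := fun x =>
  if x 0 = x 1 then (if x 0 then μ else 0) else 1

/-! ### Auxiliary machinery -/

def b2i (b : Bool) : Fin 2 := if b then 1 else 0

/-- The binary function associated with a 2×2 matrix. -/
def fnOf (M : Matrix (Fin 2) (Fin 2) ℂ) : (Fin 2 → Bool) → ℂ :=
  fun x => M (b2i (x 0)) (b2i (x 1))

/-- The permutation `(0 1 2 3) ↦ (0 2 3 1)` used to implement composition. -/
def π4 : Equiv.Perm (Fin 4) :=
  ⟨fun i => ![0, 2, 3, 1] i, fun i => ![0, 3, 1, 2] i, by decide, by decide⟩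

lemma snoc2 (x : Fin 2 → Bool) (y : Bool) :
    (Fin.snoc (Fin.snoc x y) y : Fin 4 → Bool) = ![x 0, x 1, y, y] := by
  funext i
  fin_cases i <;> rfl

/-- The clone (restricted to binary functions) is closed under matrix product. -/
lemma matmul_mem {F : Set Fn} {A B : Matrix (Fin 2) (Fin 2) ℂ}
    (hA : HClone F ⟨2, fnOf A⟩) (hB : HClone F ⟨2, fnOf B⟩) :
    HClone F ⟨2, fnOf (A * B)⟩ := by
  have h := HClone.contract (HClone.perm π4 (HClone.tensor hA hB))
  convert h using 2
  funext x
  simp only [snoc2]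
  simp [fnOf, π4, Matrix.mul_apply, Fintype.sum_bool, Fin.sum_univ_two, b2i,
    Fin.castAdd, Fin.natAdd, Fin.castLE]
  exact add_comm _ _

abbrev Fset (μ : ℂ) : Set Fn :=
  ((fun g => (⟨2, g⟩ : Fn)) '' {g | InI g} ∪ {⟨2, NEQfn⟩, ⟨2, tfn μ⟩})

lemma NEQ_eq : NEQfn = fnOf !![0,1;1,0] := by
  funext x
  rcases hx : x 0 <;> rcases hy : x 1 <;> simp [NEQfn, fnOf, hx, hy, b2i]

lemma tfn_eq (μ : ℂ) : tfn μ = fnOf !![0,1;1,μ] := by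
  funext x
  rcases hx : x 0 <;> rcases hy : x 1 <;> simp [tfn, fnOf, hx, hy, b2i]

lemma X_mem (μ : ℂ) : HClone (Fset μ) ⟨2, fnOf !![0,1;1,0]⟩ := by
  rw [← NEQ_eq]; exact HClone.base (Or.inr (Or.inl rfl))

lemma T_mem (μ : ℂ) : HClone (Fset μ) ⟨2, fnOf !![0,1;1,μ]⟩ := by
  rw [← tfn_eq]; exact HClone.base (Or.inr (Or.inr rfl))

lemma diag_mem (μ a b : ℂ) (ha : a ≠ 0) (hb : b ≠ 0) :
    HClone (Fset μ) ⟨2, fnOf !![a,0;0,b]⟩ := by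
  refine HClone.base (Or.inl ⟨fnOf !![a,0;0,b], ?_, rfl⟩)
  refine ⟨?_, ?_, ?_⟩ <;> simp [fnOf, b2i, ha, hb]

/-- Lower unitriangular matrices are in the clone. -/
lemma L_mem (μ : ℂ) (hμ : μ ≠ 0) (m : ℂ) :
    HClone (Fset μ) ⟨2, fnOf !![1,0;m,1]⟩ := by
  rcases eq_or_ne m 0 with hm | hm
  · subst hm
    exact diag_mem μ 1 1 one_ne_zero one_ne_zero
  · obtain ⟨d, hd2⟩ : ∃ d : ℂ, d ^ 2 = μ / m :=
      IsAlgClosed.exists_pow_nat_eq (μ / m) (n := 2) (by norm_num)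
    have hd : d ≠ 0 := by
      intro h; rw [h] at hd2
      exact hμ (by field_simp at hd2; simpa using hd2.symm)
    have hμeq : μ = d ^ 2 * m := by
      rw [hd2]; field_simp
    have key : !![d,0;0,d⁻¹] * !![0,1;1,μ] * !![d,0;0,d⁻¹] * !![(0:ℂ),1;1,0]
        = !![1,0;m,1] := by
      rw [hμeq]
      have h1 : d * d⁻¹ = 1 := by field_simp
      have h2 : d⁻¹ * d = 1 := by field_simp
      have h3 : d⁻¹ * (d ^ 2 * m) * d⁻¹ = m := by field_simp
      simp [Matrix.mul_fin_two, h1, h2, h3]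
    rw [← key]
    exact matmul_mem (matmul_mem (matmul_mem
      (diag_mem μ d d⁻¹ hd (inv_ne_zero hd)) (T_mem μ))
      (diag_mem μ d d⁻¹ hd (inv_ne_zero hd))) (X_mem μ)

/-- Upper unitriangular matrices are in the clone. -/
lemma U_mem (μ : ℂ) (hμ : μ ≠ 0) (m : ℂ) :
    HClone (Fset μ) ⟨2, fnOf !![1,m;0,1]⟩ := by
  have key : !![(0:ℂ),1;1,0] * !![1,0;m,1] * !![0,1;1,0] = !![1,m;0,1] := by
    simp [Matrix.mul_fin_two]
  rw [← key]
  exact matmul_mem (matmul_mem (X_mem μ) (L_mem μ hμ m)) (X_mem μ)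

/-- Every invertible 2×2 matrix gives a function in the clone. -/
lemma inv_mem (μ : ℂ) (hμ : μ ≠ 0) (a b c d : ℂ) (hdet : a * d - b * c ≠ 0) :
    HClone (Fset μ) ⟨2, fnOf !![a,b;c,d]⟩ := by
  rcases eq_or_ne a 0 with ha | ha
  · subst ha
    have hb : b ≠ 0 := fun h => hdet (by rw [h]; ring)
    have hc : c ≠ 0 := fun h => hdet (by rw [h]; ring)
    have key : !![(0:ℂ),1;1,0] * !![c,0;0,b] * !![1,d/c;0,1] = !![0,b;c,d] := by
      have h1 : c * (d / c) = d := by field_simp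
      simp [Matrix.mul_fin_two, h1]
    rw [← key]
    exact matmul_mem (matmul_mem (X_mem μ) (diag_mem μ c b hc hb)) (U_mem μ hμ (d/c))
  · have hda : (a * d - b * c) / a ≠ 0 := div_ne_zero hdet ha
    have key : !![1,0;c/a,1] * !![a,0;0,(a*d-b*c)/a] * !![1,b/a;0,1]
        = !![a,b;c,d] := by
      have h1 : c / a * a = c := by field_simp
      have h2 : a * (b / a) = b := by field_simp
      have h3 : c * (b / a) + (a * d - b * c) / a = d := by
        field_simp; ring
      simp [Matrix.mul_fin_two, h1, h2, h3]
    rw [← key]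
    exact matmul_mem (matmul_mem (L_mem μ hμ (c/a)) (diag_mem μ a _ ha hda))
      (U_mem μ hμ (b/a))

lemma f_eq_fnOf (f : (Fin 2 → Bool) → ℂ) :
    f = fnOf !![f ![false,false], f ![false,true]; f ![true,false], f ![true,true]] := by
  funext x
  have hx : ![x 0, x 1] = x := by
    funext i; fin_cases i <;> rfl
  rcases h0 : x 0 <;> rcases h1 : x 1 <;>
    · rw [← hx, h0, h1]; simp [fnOf, b2i]

/-- Every non-degenerate binary function (one whose 2×2 matrix is invertible) lies in
the holant clone generated by `𝓘 ∪ {NEQ, t}`, where `t = [0,1,μ]` with `μ ≠ 0`. -/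
theorem nondeg_binary_in_clone (μ : ℂ) (hμ : μ ≠ 0)
    (f : (Fin 2 → Bool) → ℂ)
    (hf : f ![false, false] * f ![true, true] -
          f ![false, true] * f ![true, false] ≠ 0) :
    HClone ((fun g => (⟨2, g⟩ : Fn)) '' {g | InI g} ∪ {⟨2, NEQfn⟩, ⟨2, tfn μ⟩})
      ⟨2, f⟩ := by
  rw [f_eq_fnOf f]
  exact inv_mem μ hμ _ _ _ _ hf
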